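/- arXiv:math/0505275 — 7 statements merged into one kernel-verified Lean document; each statement's English description precedes it below -/
import Mathlib

section
/- Let p be an odd prime and let u := ∑_{i=0}^{(p-1)/2} C((p-1)/2, i)² · λ^i ∈ 𝔽_p[λ] be the Hasse polynomial, where C(m,i) denotes the binomial coefficient. Then u satisfies the Gauss hypergeometric differential equation modulo p: in 𝔽_p[λ] one has 4·λ(λ-1)·u'' + 4·(2λ-1)·u' + u = 0, where u' and u'' denote the first and second formal derivatives of u with respect to λ. -/
open Polynomial

/-- Let `p` be an odd prime and let
`u = ∑_{i=0}^{(p-1)/2} C((p-1)/2, i)² λ^i ∈ 𝔽_p[λ]` be the Hasse polynomial.  Then `u`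
satisfies the Gauss hypergeometric differential equation modulo `p`:
`4 λ(λ-1) u'' + 4 (2λ-1) u' + u = 0` in `𝔽_p[λ]`. -/
theorem stmt3 (p : ℕ) (hp : p.Prime) (hodd : Odd p)
    (u : Polynomial (ZMod p))
    (hu : u = ∑ i ∈ Finset.range ((p - 1) / 2 + 1),
      Polynomial.C ((Nat.choose ((p - 1) / 2) i : ZMod p) ^ 2) * X ^ i) :
    4 * (X * (X - 1)) * derivative (derivative u)
      + 4 * (2 * X - 1) * derivative u + u = 0 := by
  set m := (p - 1) / 2 with hm
  have hp2 : p = 2 * m + 1 := by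
    rcases hodd with ⟨k, hk⟩
    have := hp.two_le
    omega
  set B : ℕ → ZMod p := fun n => ((m.choose n : ZMod p)) ^ 2 with hB
  have hcoeff : ∀ n, u.coeff n = B n := by
    intro n
    simp only [hu, finset_sum_coeff, coeff_C_mul, coeff_X_pow, mul_ite, mul_one, mul_zero,
      Finset.sum_ite_eq, Finset.mem_range]
    split
    · rfl
    · next h =>
      have hz : m.choose n = 0 := Nat.choose_eq_zero_of_lt (by omega)
      simp [hB, hz]
  have hd1 : ∀ n, (derivative u).coeff n = ((n : ZMod p) + 1) * B (n + 1) := by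
    intro n
    rw [coeff_derivative, hcoeff]
    ring
  have hd2 : ∀ n, (derivative (derivative u)).coeff n
      = ((n : ZMod p) + 1) * ((n : ZMod p) + 2) * B (n + 2) := by
    intro n
    rw [coeff_derivative, hd1]
    push_cast
    ring
  have key : ∀ n : ℕ, (2 * (n : ZMod p) + 1) ^ 2 * B n
      = (2 * ((n : ZMod p) + 1)) ^ 2 * B (n + 1) := by
    intro n
    by_cases hnm : n ≤ m
    · have h1 : (m.choose (n + 1) * (n + 1) : ℕ) = m.choose n * (m - n) :=
        Nat.choose_succ_right_eq m n
      have h2 : ((m.choose (n + 1) : ZMod p) * ((n : ZMod p) + 1))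
          = (m.choose n : ZMod p) * ((m - n : ℕ) : ZMod p) := by
        have := congrArg (Nat.cast : ℕ → ZMod p) h1
        push_cast at this
        exact this
      have h3 : ((m - n : ℕ) : ZMod p) * 2 = -(2 * (n : ZMod p) + 1) := by
        have e : 2 * (m - n) = p - (2 * n + 1) := by omega
        have e2 : (((p - (2 * n + 1) : ℕ)) : ZMod p) = (p : ZMod p) - ((2 * n + 1 : ℕ) : ZMod p) :=
          Nat.cast_sub (by omega)
        calc ((m - n : ℕ) : ZMod p) * 2 = ((2 * (m - n) : ℕ) : ZMod p) := by push_cast; ring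
          _ = ((p - (2 * n + 1) : ℕ) : ZMod p) := by rw [e]
          _ = -(2 * (n : ZMod p) + 1) := by
              rw [e2, ZMod.natCast_self]; push_cast; ring
      have s1 : ((m.choose (n + 1) : ZMod p) * ((n : ZMod p) + 1)) ^ 2
          = ((m.choose n : ZMod p) * ((m - n : ℕ) : ZMod p)) ^ 2 := by rw [h2]
      have s2 : (((m - n : ℕ) : ZMod p) * 2) ^ 2 = (2 * (n : ZMod p) + 1) ^ 2 := by
        rw [h3]; ring
      simp only [hB]
      linear_combination (-((m.choose n : ZMod p) ^ 2)) * s2 - 4 * s1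
    · have hz1 : m.choose n = 0 := Nat.choose_eq_zero_of_lt (by omega)
      have hz2 : m.choose (n + 1) = 0 := Nat.choose_eq_zero_of_lt (by omega)
      simp [hB, hz1, hz2]
  set D1 := derivative u with hD1
  set D2 := derivative (derivative u) with hD2
  have expand : 4 * (X * (X - 1)) * D2 + 4 * (2 * X - 1) * D1 + u
      = C 4 * (D2 * X ^ 2) - C 4 * (D2 * X ^ 1) + C 8 * (D1 * X ^ 1) - C 4 * D1 + u := by
    have h4 : (C (4 : ZMod p)) = 4 := map_ofNat C 4
    have h8 : (C (8 : ZMod p)) = 8 := map_ofNat C 8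
    rw [h4, h8]; ring
  rw [expand]
  ext n
  simp only [coeff_add, coeff_sub, coeff_C_mul, coeff_mul_X_pow', coeff_zero]
  match n with
  | 0 =>
      norm_num
      rw [hd1, hcoeff]
      have := key 0
      push_cast at this ⊢
      linear_combination this
  | 1 =>
      norm_num
      rw [hd2, hd1, hd1, hcoeff]
      have := key 1
      push_cast at this ⊢
      linear_combination this
  | (k + 2) =>
      have c2 : 2 ≤ k + 2 := by omega
      have c1 : 1 ≤ k + 2 := by omega
      rw [if_pos c2, if_pos c1]
      have e2 : k + 2 - 2 = k := by omega
      have e1 : k + 2 - 1 = k + 1 := by omega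
      rw [e2, e1, hd2 k, hd2 (k + 1), hd1 (k + 1), hd1 (k + 2), hcoeff]
      have := key (k + 2)
      push_cast at this ⊢
      linear_combination this
end

section
/- Let p be an odd prime and let a₁, a₂, a₃ be nonnegative integers with a₁ + a₂ + a₃ even and a₁ + a₂ + a₃ ≤ p - 1. Set d := (p - 1 - a₁ - a₂ - a₃)/2, and define in 𝔽_p the elements A := (1 + a₁ + a₂ + a₃)/2, B := (1 + a₁ + a₂ - a₃)/2 and C := 1 + a₁ (division by 2 taken in 𝔽_p). Then the hypergeometric differential equation t(t-1)·u'' + ((A + B + 1)t - C)·u' + A·B·u = 0 has a nonzero polynomial solution u ∈ 𝔽_p[t] of degree d. -/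
open Polynomial

noncomputable def hgc {F : Type*} [Field F] (A B C : F) (d : ℕ) : ℕ → F
  | 0 => 1
  | k + 1 =>
      if k < d then (k + A) * (k + B) * (((k : F) + 1) * (k + C))⁻¹ * hgc A B C d k
      else 0

lemma hgc_zero_of_gt {F : Type*} [Field F] (A B C : F) (d : ℕ) :
    ∀ k, d < k → hgc A B C d k = 0 := by
  intro k
  induction k with
  | zero => omega
  | succ m ih =>
    intro h
    rw [hgc]
    rw [if_neg (by omega)]

lemma hgc_rec {F : Type*} [Field F] (A B C : F) (d : ℕ)
    (h1 : ∀ k, k < d → ((k : F) + 1) * ((k : F) + C) ≠ 0)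
    (h2 : ((d : F) + A) = 0) :
    ∀ k : ℕ, ((k : F) + 1) * ((k : F) + C) * hgc A B C d (k + 1)
        = ((k : F) + A) * ((k : F) + B) * hgc A B C d k := by
  intro k
  rcases lt_trichotomy k d with h | h | h
  · rw [hgc, if_pos h]
    field_simp [h1 k h]
    rw [div_eq_iff (h1 k h)]
    ring
  · subst h
    rw [hgc, if_neg (lt_irrefl _), h2]
    ring_nf
  · rw [hgc_zero_of_gt A B C d k h, hgc_zero_of_gt A B C d (k + 1) (by omega)]
    ring

lemma hgc_ne_zero {F : Type*} [Field F] (A B C : F) (d : ℕ)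
    (h1 : ∀ k, k < d → ((k : F) + 1) * ((k : F) + C) ≠ 0)
    (h3 : ∀ k, k < d → ((k : F) + A) * ((k : F) + B) ≠ 0) :
    ∀ k, k ≤ d → hgc A B C d k ≠ 0 := by
  intro k
  induction k with
  | zero => intro _; rw [hgc]; exact one_ne_zero
  | succ m ih =>
    intro h
    have hm : m < d := by omega
    rw [hgc, if_pos hm]
    exact mul_ne_zero (mul_ne_zero (h3 m hm) (inv_ne_zero (h1 m hm))) (ih (by omega))

/-- Let `p` be an odd prime and `a₁, a₂, a₃` nonnegative integers with
`a₁ + a₂ + a₃` even and `a₁ + a₂ + a₃ ≤ p - 1`.  Set `d := (p - 1 - a₁ - a₂ - a₃)/2` and,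
in `𝔽_p`, `A := (1 + a₁ + a₂ + a₃)/2`, `B := (1 + a₁ + a₂ - a₃)/2`, `C := 1 + a₁`.
Then the hypergeometric equation `t(t-1) u'' + ((A+B+1) t - C) u' + A B u = 0` has a
nonzero polynomial solution `u ∈ 𝔽_p[t]` of degree `d`. -/
theorem stmt4 (p : ℕ) (hp : p.Prime) (hodd : Odd p)
    (a₁ a₂ a₃ : ℕ) (heven : Even (a₁ + a₂ + a₃)) (hle : a₁ + a₂ + a₃ ≤ p - 1)
    (d : ℕ) (hd : d = (p - 1 - (a₁ + a₂ + a₃)) / 2)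
    (A B C' : ZMod p)
    (hA : A = (1 + (a₁ : ZMod p) + a₂ + a₃) * (2 : ZMod p)⁻¹)
    (hB : B = (1 + (a₁ : ZMod p) + a₂ - a₃) * (2 : ZMod p)⁻¹)
    (hC : C' = 1 + (a₁ : ZMod p)) :
    ∃ u : Polynomial (ZMod p), u ≠ 0 ∧ u.natDegree = d ∧
      X * (X - 1) * derivative (derivative u)
        + (Polynomial.C (A + B + 1) * X - Polynomial.C C') * derivative u
        + Polynomial.C (A * B) * u = 0 := by
  have hp3 : 3 ≤ p := by
    have h2 := hp.two_le
    have : p ≠ 2 := by rintro rfl; exact (by decide : ¬ Odd 2) hodd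
    omega
  have htwo : (2 : ZMod p) ≠ 0 := by
    have : ((2 : ℕ) : ZMod p) ≠ 0 := by
      rw [Ne, ZMod.natCast_eq_zero_iff]
      intro h
      have := Nat.le_of_dvd (by norm_num) h
      omega
    simpa using this
  have hkey : 2 * d + (a₁ + a₂ + a₃) + 1 = p := by
    have hev : Even (p - 1 - (a₁ + a₂ + a₃)) := by
      rcases heven with ⟨m, hm⟩
      rcases hodd with ⟨m', hm'⟩
      exact ⟨m' - m, by omega⟩
    rcases hev with ⟨m, hm⟩
    omega
  haveI : NeZero p := ⟨hp.pos.ne'⟩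
  haveI : Fact p.Prime := ⟨hp⟩
  have hnz : ∀ n : ℕ, 0 < n → n < p → (n : ZMod p) ≠ 0 := by
    intro n h1 h2
    rw [Ne, ZMod.natCast_eq_zero_iff]
    intro hdvd
    have := Nat.le_of_dvd h1 hdvd
    omega
  have h2A : (2 : ZMod p) * A = 1 + (a₁ : ZMod p) + a₂ + a₃ := by
    rw [hA, mul_comm, inv_mul_cancel_right₀ htwo]
  have h2B : (2 : ZMod p) * B = 1 + (a₁ : ZMod p) + a₂ - a₃ := by
    rw [hB, mul_comm, inv_mul_cancel_right₀ htwo]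
  have hdA : (d : ZMod p) + A = 0 := by
    apply mul_left_cancel₀ htwo
    have : (2 : ZMod p) * ((d : ZMod p) + A) = ((2 * d + (a₁ + a₂ + a₃) + 1 : ℕ) : ZMod p) := by
      push_cast
      rw [mul_add, h2A]
      ring
    rw [this, hkey, ZMod.natCast_self, mul_zero]
  have h1 : ∀ k, k < d → ((k : ZMod p) + 1) * ((k : ZMod p) + C') ≠ 0 := by
    intro k hk
    apply mul_ne_zero
    · have : ((k : ZMod p) + 1) = ((k + 1 : ℕ) : ZMod p) := by push_cast; ring
      rw [this]
      exact hnz (k + 1) (by omega) (by omega)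
    · have : ((k : ZMod p) + C') = ((k + 1 + a₁ : ℕ) : ZMod p) := by
        rw [hC]; push_cast; ring
      rw [this]
      exact hnz (k + 1 + a₁) (by omega) (by omega)
  have h3 : ∀ k, k < d → ((k : ZMod p) + A) * ((k : ZMod p) + B) ≠ 0 := by
    intro k hk
    have hevm : (a₁ + a₂ + a₃) % 2 = 0 := Nat.even_iff.mp heven
    apply mul_ne_zero
    · intro hz
      have h2z : (2 : ZMod p) * ((k : ZMod p) + A) = 0 := by rw [hz, mul_zero]
      have : (2 : ZMod p) * ((k : ZMod p) + A) = ((2 * k + 1 + (a₁ + a₂ + a₃) : ℕ) : ZMod p) := by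
        push_cast
        rw [mul_add, h2A]
        ring
      rw [this] at h2z
      exact hnz (2 * k + 1 + (a₁ + a₂ + a₃)) (by omega) (by omega) h2z
    · intro hz
      have h2z : (2 : ZMod p) * ((k : ZMod p) + B) = 0 := by rw [hz, mul_zero]
      have hval : (2 : ZMod p) * ((k : ZMod p) + B)
          = ((2 * k + 1 + a₁ + a₂ : ℕ) : ZMod p) - (a₃ : ZMod p) := by
        push_cast
        rw [mul_add, h2B]
        ring
      rw [hval] at h2z
      rcases le_or_gt a₃ (2 * k + 1 + a₁ + a₂) with hcase | hcase
      · rw [← Nat.cast_sub hcase] at h2z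
        exact hnz (2 * k + 1 + a₁ + a₂ - a₃) (by omega) (by omega) h2z
      · have : -(((a₃ - (2 * k + 1 + a₁ + a₂) : ℕ) : ZMod p)) = 0 := by
          rw [Nat.cast_sub (by omega)]
          push_cast
          push_cast at h2z
          linear_combination h2z
        rw [neg_eq_zero] at this
        exact hnz (a₃ - (2 * k + 1 + a₁ + a₂)) (by omega) (by omega) this
  set c : ℕ → ZMod p := hgc A B C' d with hc
  have hrec := hgc_rec A B C' d h1 hdA
  have hne := hgc_ne_zero A B C' d h1 h3
  set u : Polynomial (ZMod p) := ∑ k ∈ Finset.range (d + 1), monomial k (c k) with hu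
  have hcoeff : ∀ n, u.coeff n = c n := by
    intro n
    rw [hu, finset_sum_coeff]
    simp only [coeff_monomial]
    rw [Finset.sum_ite_eq' (Finset.range (d + 1)) n]
    by_cases h : n ∈ Finset.range (d + 1)
    · rw [if_pos h]
    · rw [if_neg h]
      exact (hgc_zero_of_gt A B C' d n (by simpa using h)).symm
  have hcd : c d ≠ 0 := hne d le_rfl
  refine ⟨u, ?_, ?_, ?_⟩
  · intro h
    exact hcd (by rw [← hcoeff d, h, coeff_zero])
  · refine le_antisymm (natDegree_le_iff_coeff_eq_zero.mpr fun N hN => ?_)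
      (le_natDegree_of_ne_zero (by rw [hcoeff]; exact hcd))
    rw [hcoeff]
    exact hgc_zero_of_gt A B C' d N hN
  · have heq : X * (X - 1) * derivative (derivative u)
        + (Polynomial.C (A + B + 1) * X - Polynomial.C C') * derivative u
        + Polynomial.C (A * B) * u
        = X * (X * derivative (derivative u)) - X * derivative (derivative u)
          + (Polynomial.C (A + B + 1) * (X * derivative u) - Polynomial.C C' * derivative u)
          + Polynomial.C (A * B) * u := by ring
    rw [heq]
    ext n
    rw [coeff_zero]
    rcases n with _ | m
    · simp only [coeff_add, coeff_sub, coeff_C_mul, coeff_X_mul_zero, coeff_derivative, hcoeff]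
      have h0 := hrec 0
      push_cast at h0 ⊢
      linear_combination -h0
    · rcases m with _ | m
      · simp only [coeff_add, coeff_sub, coeff_C_mul, coeff_derivative, hcoeff,
          coeff_X_mul, coeff_X_mul_zero]
        have h1' := hrec 1
        push_cast at h1' ⊢
        linear_combination -h1'
      · simp only [coeff_add, coeff_sub, coeff_C_mul, coeff_derivative, hcoeff,
          coeff_X_mul]
        have hr := hrec (m + 2)
        push_cast at hr ⊢
        linear_combination -hr
end

section
/- Let p be an odd prime, k an algebraically closed field of characteristic p, λ ∈ k with λ ≠ 0 and λ ≠ 1, and β ∈ k. Let L be the operator L(u) = t(t-1)(t-λ)·u'' + (3t² - 2(1+λ)t + λ)·u' + (t - β)·u on k[t]. If u ∈ k[t] is a nonzero polynomial with L(u) = 0, then for each c ∈ {0, 1, λ} the multiplicity of c as a root of u is divisible by p. Consequently, if moreover deg(u) = p - 1, then u(0) ≠ 0, u(1) ≠ 0 and u(λ) ≠ 0. -/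
open Polynomial

/-- The operator `L(u) = t(t-1)(t-λ) u'' + (3t² - 2(1+λ)t + λ) u' + (t - β) u`
on the polynomial ring `k[t]`. -/
noncomputable def Lop {k : Type*} [Field k] (l b : k) (u : Polynomial k) : Polynomial k :=
  X * (X - 1) * (X - C l) * derivative (derivative u)
    + (3 * X ^ 2 - Polynomial.C (2 * (1 + l)) * X + C l) * derivative u
    + (X - C b) * u

lemma Lop_eq' {k : Type*} [Field k] (l b : k) (u : Polynomial k) :
    Lop l b u = derivative (X * (X - 1) * (X - C l) * derivative u) + (X - C b) * u := by
  simp only [Lop, derivative_mul, derivative_X, derivative_sub, derivative_one, derivative_C,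
    C_mul, C_add, map_ofNat, C_1]
  ring

lemma key {k : Type*} [Field k] (p : ℕ) [CharP k p] (l b c : k) (q : Polynomial k)
    (hA : X * (X - 1) * (X - C l) = (X - C c) * q) (hqc : q.eval c ≠ 0)
    (u : Polynomial k) (hu : u ≠ 0) (hLu : Lop l b u = 0) : p ∣ u.rootMultiplicity c := by
  rcases Nat.eq_zero_or_pos (u.rootMultiplicity c) with h0 | hpos
  · simp [h0]
  obtain ⟨m', hm'⟩ : ∃ m', u.rootMultiplicity c = m' + 1 :=
    ⟨_, (Nat.succ_pred_eq_of_pos hpos).symm⟩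
  rw [hm']
  have huv : (X - C c) ^ (m' + 1) * (u /ₘ (X - C c) ^ (m' + 1)) = u := by
    rw [← hm']; exact u.pow_mul_divByMonic_rootMultiplicity_eq c
  have hvc : eval c (u /ₘ (X - C c) ^ (m' + 1)) ≠ 0 := by
    rw [← hm']; exact eval_divByMonic_pow_rootMultiplicity_ne_zero c hu
  set s : Polynomial k := X - C c with hs
  set v : Polynomial k := u /ₘ s ^ (m' + 1) with hv
  set G : Polynomial k := (C ((m' + 1 : ℕ) : k)) * (q * v) + s * (q * derivative v) with hG
  have h1 : (s * q) * derivative (s ^ (m' + 1) * v) = s ^ (m' + 1) * G := by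
    have hds : derivative s = 1 := by simp [hs]
    simp only [hG, derivative_mul, derivative_pow, hds, mul_one, Nat.add_sub_cancel]
    push_cast
    ring
  set W : Polynomial k := (C ((m' + 1 : ℕ) : k)) * G + s * derivative G + s * ((X - C b) * v)
    with hW
  have hfac : Lop l b u = s ^ m' * W := by
    have hds : derivative s = 1 := by simp [hs]
    rw [Lop_eq', ← huv, hA, h1, derivative_mul, derivative_pow, hds]
    simp only [hW, mul_one, Nat.add_sub_cancel]
    ring
  have hW0 : W = 0 := by
    have h : s ^ m' * W = 0 := by rw [← hfac, hLu]
    rcases mul_eq_zero.mp h with h | h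
    · exact absurd h (pow_ne_zero _ (X_sub_C_ne_zero c))
    · exact h
  have hev := congrArg (eval c) hW0
  simp only [hW, hG, hs, eval_add, eval_mul, eval_pow, eval_C, eval_sub, eval_X, sub_self,
    zero_mul, mul_zero, add_zero, eval_zero] at hev
  have hcast : ((m' + 1 : ℕ) : k) = 0 := by
    by_contra hne
    exact (mul_ne_zero hne (mul_ne_zero hne (mul_ne_zero hqc hvc))) hev
  exact (CharP.cast_eq_zero_iff k p _).mp hcast

/-- Let `p` be an odd prime, `k` algebraically closed of characteristic
`p`, `λ ∈ k \ {0,1}`, `β ∈ k`.  If `u ∈ k[t]` is a nonzero polynomial with `L(u) = 0`,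
then for each `c ∈ {0, 1, λ}` the multiplicity of `c` as a root of `u` is divisible by
`p`; consequently, if moreover `deg u = p - 1`, then `u(0) ≠ 0`, `u(1) ≠ 0`, `u(λ) ≠ 0`. -/
theorem stmt8 {k : Type*} [Field k] [IsAlgClosed k] (p : ℕ) (hp : p.Prime) (hodd : Odd p)
    [CharP k p] (l b : k) (hl0 : l ≠ 0) (hl1 : l ≠ 1)
    (u : Polynomial k) (hu : u ≠ 0) (hLu : Lop l b u = 0) :
    (∀ c ∈ ({0, 1, l} : Set k), p ∣ u.rootMultiplicity c) ∧
      (u.natDegree = p - 1 → u.eval 0 ≠ 0 ∧ u.eval 1 ≠ 0 ∧ u.eval l ≠ 0) := by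
  have hmain : ∀ c ∈ ({0, 1, l} : Set k), p ∣ u.rootMultiplicity c := by
    intro c hc
    simp only [Set.mem_insert_iff, Set.mem_singleton_iff] at hc
    rcases hc with rfl | rfl | h
    · refine key p l b 0 ((X - 1) * (X - C l)) ?_ ?_ u hu hLu
      · rw [map_zero]; ring
      · simp only [eval_mul, eval_sub, eval_X, eval_C, eval_one, zero_sub, neg_mul_neg, one_mul]
        exact hl0
    · refine key p l b 1 (X * (X - C l)) ?_ ?_ u hu hLu
      · rw [map_one]; ring
      · simp only [eval_mul, eval_sub, eval_X, eval_C, one_mul]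
        exact sub_ne_zero.mpr (Ne.symm hl1)
    · rw [h]
      refine key p l b l (X * (X - 1)) ?_ ?_ u hu hLu
      · ring
      · simp only [eval_mul, eval_sub, eval_X, eval_one]
        exact mul_ne_zero hl0 (sub_ne_zero.mpr hl1)
  refine ⟨hmain, fun hdeg => ?_⟩
  have hzero : ∀ c ∈ ({0, 1, l} : Set k), u.eval c ≠ 0 := by
    intro c hc
    have hdvd := hmain c hc
    have hle : u.rootMultiplicity c ≤ u.natDegree := by
      have h1 := Polynomial.natDegree_le_of_dvd (u.pow_rootMultiplicity_dvd c) hu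
      simpa [natDegree_pow] using h1
    have hlt : u.rootMultiplicity c < p := by
      have := hp.one_lt; omega
    have h0 : u.rootMultiplicity c = 0 := Nat.eq_zero_of_dvd_of_lt hdvd hlt
    intro heval
    have hpos : 0 < u.rootMultiplicity c := (rootMultiplicity_pos hu).mpr heval
    omega
  exact ⟨hzero 0 (by simp), hzero 1 (by simp), hzero l (by simp)⟩
end

section
/- Let p be an odd prime, k an algebraically closed field of characteristic p, λ ∈ k with λ ≠ 0 and λ ≠ 1, and β ∈ k. Let L be the operator L(u) = t(t-1)(t-λ)·u'' + (3t² - 2(1+λ)t + λ)·u' + (t - β)·u on k[t]. If u₁, u₂ ∈ k[t] are polynomials with L(u₁) = L(u₂) = 0, then their Wronskian vanishes: u₁·u₂' - u₁'·u₂ = 0; equivalently, u₁ and u₂ are linearly dependent over the subfield k(t^p) of k(t). -/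
open Polynomial

section Aux

variable {k : Type*} [Field k]

/-- The first-order coefficient of `L` is the derivative of the leading one, so the
Wronskian `W` of two solutions satisfies `(aW)' = 0`. -/
private theorem wronskian_ode (l b : k) (v₁ v₂ : Polynomial k) :
    derivative ((X * (X-1) * (X - C l)) * (v₁ * derivative v₂ - derivative v₁ * v₂))
      = v₁ * Lop l b v₂ - v₂ * Lop l b v₁ := by
  simp only [Lop, derivative_mul, derivative_sub, derivative_X, derivative_one, derivative_C,
    map_add, map_mul, map_one, map_ofNat]
  ring

private theorem deriv_X_pow_mul {m : ℕ} (hm : (m : k) = 0) (w : Polynomial k) :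
    derivative (X ^ m * w) = X ^ m * derivative w := by
  simp [derivative_mul, derivative_X_pow, hm]

/-- In characteristic `p`, with `p ∣ m`, the operator `L` commutes with
multiplication by `X^m`. -/
private theorem Lop_X_pow_mul (l b : k) {m : ℕ} (hm : (m : k) = 0) (v : Polynomial k) :
    Lop l b (X ^ m * v) = X ^ m * Lop l b v := by
  simp only [Lop, deriv_X_pow_mul hm]
  ring

private theorem Lop_shift_id (l b : k) (n : ℕ) (v : Polynomial k) :
    Lop l b (X^(n+1) * v) =
      X^(n+1) * (X * ((X-1)*(X - C l)) * derivative (derivative v)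
          + (C (2*((n:k)+1)) * ((X-1)*(X - C l)) + (3 * X ^ 2 - C (2 * (1 + l)) * X + C l)) * derivative v
          + (X - C b) * v)
      + C ((n:k)+1) * X^n *
          (C (n:k) * ((X-1)*(X - C l)) * v + (3 * X ^ 2 - C (2 * (1 + l)) * X + C l) * v) := by
  rcases n with _ | s
  · simp only [zero_add, pow_one, Nat.cast_zero, map_zero, zero_mul, pow_zero,
      derivative_mul, derivative_X, derivative_X_pow, Lop, map_add, map_mul, map_one, map_ofNat,
      Nat.cast_one, zero_add, one_mul]
    ring
  · simp only [Lop, derivative_mul, derivative_X_pow, Nat.cast_add, Nat.cast_one,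
      map_add, map_mul, map_one, map_ofNat, Nat.add_sub_cancel, derivative_C, derivative_one]
    ring

/-- The indicial equation of `L` at `0` is `λ m² = 0`: the local exponents there are
`(0,0)`, so the order of vanishing of a polynomial solution is divisible by `p`. -/
private theorem indicial {l b : k} (hl0 : l ≠ 0) (m : ℕ) (v : Polynomial k)
    (hv : eval 0 v ≠ 0) (hL : Lop l b (X^m * v) = 0) : (m : k) = 0 := by
  rcases m with _ | n
  · exact Nat.cast_zero
  have hid := Lop_shift_id l b n v
  rw [hL] at hid
  have hc := congrArg (fun q => coeff q n) hid
  simp only [coeff_zero, coeff_add] at hc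
  set R := (X * ((X-1)*(X - C l)) * derivative (derivative v)
      + (C (2*((n:k)+1)) * ((X-1)*(X - C l)) + (3 * X ^ 2 - C (2 * (1 + l)) * X + C l)) * derivative v
      + (X - C b) * v) with hR
  set Q := (C (n:k) * ((X-1)*(X - C l)) * v + (3 * X ^ 2 - C (2 * (1 + l)) * X + C l) * v) with hQ
  have h1 : (X ^ (n+1) * R).coeff n = 0 :=
    Polynomial.X_pow_dvd_iff.mp (dvd_mul_right _ _) n (Nat.lt_succ_self n)
  have h2 : (X ^ n * Q).coeff n = Q.coeff 0 := by
    simpa using Polynomial.coeff_X_pow_mul Q n 0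
  rw [h1, mul_assoc, coeff_C_mul, h2, zero_add] at hc
  have hQ0 : Q.coeff 0 = ((n:k) + 1) * (l * eval 0 v) := by
    rw [coeff_zero_eq_eval_zero]
    simp [hQ]
    ring
  rw [hQ0] at hc
  have : ((n:k) + 1) = 0 := by
    rcases mul_eq_zero.mp hc.symm with h | h
    · exact h
    · rcases mul_eq_zero.mp h with h' | h'
      · exact h'
      · rcases mul_eq_zero.mp h' with h'' | h''
        · exact absurd h'' hl0
        · exact absurd h'' hv
  simpa using this

/-- Over a perfect field of characteristic `p`, a polynomial with vanishing derivative
is a `p`-th power. -/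
private theorem pow_p_of_deriv_zero [IsAlgClosed k] (p : ℕ) (hp : p.Prime)
    [CharP k p] {f : Polynomial k} (hf : derivative f = 0) :
    ∃ g : Polynomial k, f = g ^ p := by
  haveI : Fact p.Prime := ⟨hp⟩
  haveI : ExpChar k p := ExpChar.prime hp
  set g₀ := Polynomial.contract p f with hg₀
  have h1 : Polynomial.expand k p g₀ = f := Polynomial.expand_contract p hf hp.ne_zero
  refine ⟨g₀.map ((frobeniusEquiv k p).symm : k ≃+* k), ?_⟩
  have h2 : (g₀.map ((frobeniusEquiv k p).symm : k ≃+* k)).map (frobenius k p) = g₀ := by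
    rw [Polynomial.map_map]
    simp [frobenius_comp_frobeniusEquiv_symm]
  calc f = Polynomial.expand k p g₀ := h1.symm
    _ = Polynomial.expand k p ((g₀.map ((frobeniusEquiv k p).symm : k ≃+* k)).map (frobenius k p)) := by rw [h2]
    _ = (Polynomial.expand k p (g₀.map ((frobeniusEquiv k p).symm : k ≃+* k))).map (frobenius k p) := by
        rw [Polynomial.map_expand]
    _ = _ := Polynomial.map_frobenius_expand p _

private theorem rootMult_pow {f : Polynomial k} (hf : f ≠ 0) (n : ℕ) :
    rootMultiplicity 0 (f ^ n) = n * rootMultiplicity 0 f := by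
  induction n with
  | zero => simp [rootMultiplicity_eq_zero (show ¬ IsRoot (1 : Polynomial k) 0 by simp [IsRoot])]
  | succ n ih =>
    rw [pow_succ, rootMultiplicity_mul (mul_ne_zero (pow_ne_zero n hf) hf), ih]
    ring

/-- The endgame: if `W₀` is the Wronskian of `v₁, v₂` with `v₁(0) ≠ 0`, and the order of
vanishing `N` of `W₀` at `0` satisfies `N ≡ -1 (mod p)`, then `W₀ = 0`: in `k⟦X⟧` we have
`W₀ = v₁² (v₂/v₁)'`, and no nonzero derivative of a power series has order `≡ -1 (mod p)`. -/
private theorem endgame (v₁ v₂ W₀ : Polynomial k)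
    (hWdef : W₀ = v₁ * derivative v₂ - derivative v₁ * v₂)
    (hv₁0 : eval 0 v₁ ≠ 0) (hWne : W₀ ≠ 0)
    (hN : ((W₀.rootMultiplicity 0 + 1 : ℕ) : k) = 0) : False := by
  set N := W₀.rootMultiplicity 0 with hNdef
  have hdvdN : (X : Polynomial k) ^ N ∣ W₀ := by
    have := Polynomial.pow_rootMultiplicity_dvd W₀ 0
    simpa using this
  have hcoeffN : W₀.coeff N ≠ 0 := by
    have hnd : ¬ (X : Polynomial k) ^ (N + 1) ∣ W₀ := by
      have := Polynomial.pow_rootMultiplicity_not_dvd hWne (0 : k)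
      simpa using this
    rw [Polynomial.X_pow_dvd_iff] at hnd
    push_neg at hnd
    obtain ⟨d, hd1, hd2⟩ := hnd
    have hdN : d = N := by
      by_contra hne
      exact hd2 (Polynomial.X_pow_dvd_iff.mp hdvdN d (lt_of_le_of_ne (Nat.lt_succ_iff.mp hd1) hne))
    rwa [hdN] at hd2
  have hc1 : PowerSeries.constantCoeff (v₁ : PowerSeries k) ≠ 0 := by
    rw [Polynomial.constantCoeff_coe, Polynomial.coeff_zero_eq_eval_zero]
    exact hv₁0
  have hinv : ((v₁ : PowerSeries k))⁻¹ * (v₁ : PowerSeries k) = 1 :=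
    PowerSeries.inv_mul_cancel _ hc1
  set q : PowerSeries k := (v₂ : PowerSeries k) * ((v₁ : PowerSeries k))⁻¹ with hqdef
  have hq : q * (v₁ : PowerSeries k) = (v₂ : PowerSeries k) := by
    rw [hqdef, mul_assoc, hinv, mul_one]
  set D := PowerSeries.derivative (R := k) with hDdef
  have hq' : D q * (v₁ : PowerSeries k) + q * D (v₁ : PowerSeries k) = D (v₂ : PowerSeries k) := by
    have := congrArg D hq
    rwa [Derivation.leibniz, smul_eq_mul, smul_eq_mul, add_comm, mul_comm] at this
  have hWcast : (W₀ : PowerSeries k) = (v₁ : PowerSeries k) ^ 2 * D q := by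
    have : (W₀ : PowerSeries k)
        = (v₁ : PowerSeries k) * D (v₂ : PowerSeries k)
          - D (v₁ : PowerSeries k) * (v₂ : PowerSeries k) := by
      rw [hWdef]
      push_cast
      rw [hDdef, PowerSeries.derivative_coe, PowerSeries.derivative_coe]
    rw [this, ← hq', ← hq]
    ring
  have hDq : D q = (((v₁ : PowerSeries k))⁻¹) ^ 2 * (W₀ : PowerSeries k) := by
    rw [hWcast, show (((v₁ : PowerSeries k))⁻¹) ^ 2 * ((v₁ : PowerSeries k) ^ 2 * D q)
      = (((v₁ : PowerSeries k))⁻¹ * (v₁ : PowerSeries k)) ^ 2 * D q by ring, hinv, one_pow, one_mul]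
  have hdvdPS : (PowerSeries.X : PowerSeries k) ^ N ∣ (W₀ : PowerSeries k) := by
    obtain ⟨c, hc⟩ := hdvdN
    exact ⟨(c : PowerSeries k), by rw [hc]; push_cast; ring⟩
  have hdvdDq : (PowerSeries.X : PowerSeries k) ^ N ∣ D q := hDq ▸ hdvdPS.mul_left _
  have hdvdDq' : (PowerSeries.X : PowerSeries k) ^ (N + 1) ∣ D q := by
    rw [PowerSeries.X_pow_dvd_iff]
    intro m hm
    rcases Nat.lt_succ_iff_lt_or_eq.mp hm with h | h
    · exact PowerSeries.X_pow_dvd_iff.mp hdvdDq m h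
    · subst h
      rw [hDdef, PowerSeries.coeff_derivative]
      have h0 : ((N : k) + 1) = 0 := by exact_mod_cast hN
      rw [h0, mul_zero]
  have : (PowerSeries.coeff N) (W₀ : PowerSeries k) = 0 := by
    refine PowerSeries.X_pow_dvd_iff.mp (hWcast ▸ hdvdDq'.mul_left ((v₁ : PowerSeries k) ^ 2)) N
      (Nat.lt_succ_self N)
  rw [Polynomial.coeff_coe] at this
  exact hcoeffN this

end Aux

/-- Let `p` be an odd prime, `k` algebraically closed of characteristic
`p`, `λ ∈ k \ {0,1}`, `β ∈ k`.  If `u₁, u₂ ∈ k[t]` satisfy `L(u₁) = L(u₂) = 0`, then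
their Wronskian vanishes: `u₁ u₂' - u₁' u₂ = 0` (equivalently, `u₁` and `u₂` are
linearly dependent over `k(t^p)`). -/
theorem stmt9 {k : Type*} [Field k] [IsAlgClosed k] (p : ℕ) (hp : p.Prime) (hodd : Odd p)
    [CharP k p] (l b : k) (hl0 : l ≠ 0) (hl1 : l ≠ 1)
    (u₁ u₂ : Polynomial k) (h₁ : Lop l b u₁ = 0) (h₂ : Lop l b u₂ = 0) :
    u₁ * derivative u₂ - derivative u₁ * u₂ = 0 := by
  by_cases hu₁ : u₁ = 0
  · simp [hu₁]
  by_cases hu₂ : u₂ = 0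
  · simp [hu₂]
  -- strip the `X`-power from each solution
  obtain ⟨v₁, hu₁e, hnd₁⟩ := u₁.exists_eq_pow_rootMultiplicity_mul_and_not_dvd hu₁ 0
  obtain ⟨v₂, hu₂e, hnd₂⟩ := u₂.exists_eq_pow_rootMultiplicity_mul_and_not_dvd hu₂ 0
  rw [map_zero, sub_zero] at hu₁e hnd₁ hu₂e hnd₂
  set m₁ := u₁.rootMultiplicity 0 with hm₁def
  set m₂ := u₂.rootMultiplicity 0 with hm₂def
  have hv₁0 : eval 0 v₁ ≠ 0 := by
    rw [← coeff_zero_eq_eval_zero]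
    exact fun h => hnd₁ (Polynomial.X_dvd_iff.mpr h)
  have hv₂0 : eval 0 v₂ ≠ 0 := by
    rw [← coeff_zero_eq_eval_zero]
    exact fun h => hnd₂ (Polynomial.X_dvd_iff.mpr h)
  have hm₁ : (m₁ : k) = 0 := indicial hl0 m₁ v₁ hv₁0 (hu₁e ▸ h₁)
  have hm₂ : (m₂ : k) = 0 := indicial hl0 m₂ v₂ hv₂0 (hu₂e ▸ h₂)
  have hLv₁ : Lop l b v₁ = 0 := by
    rw [hu₁e, Lop_X_pow_mul l b hm₁] at h₁
    exact (mul_eq_zero.mp h₁).resolve_left (pow_ne_zero _ Polynomial.X_ne_zero)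
  have hLv₂ : Lop l b v₂ = 0 := by
    rw [hu₂e, Lop_X_pow_mul l b hm₂] at h₂
    exact (mul_eq_zero.mp h₂).resolve_left (pow_ne_zero _ Polynomial.X_ne_zero)
  set W₀ := v₁ * derivative v₂ - derivative v₁ * v₂ with hW₀def
  have hW : u₁ * derivative u₂ - derivative u₁ * u₂ = X ^ (m₁ + m₂) * W₀ := by
    rw [hu₁e, hu₂e, deriv_X_pow_mul hm₁, deriv_X_pow_mul hm₂, hW₀def, pow_add]
    ring
  rw [hW]
  suffices hW₀ : W₀ = 0 by rw [hW₀, mul_zero]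
  by_contra hW₀ne
  -- the Wronskian satisfies `(aW₀)' = 0`
  have hder : derivative ((X * (X-1) * (X - C l)) * W₀) = 0 := by
    rw [hW₀def, wronskian_ode l b, hLv₁, hLv₂, mul_zero, mul_zero, sub_zero]
  obtain ⟨f, hf⟩ := pow_p_of_deriv_zero p hp hder
  -- so `aW₀` is a p-th power, whence `ord₀ W₀ ≡ -1 (mod p)`
  have ha : (X * (X-1) * (X - C l) : Polynomial k) ≠ 0 := by
    refine mul_ne_zero (mul_ne_zero Polynomial.X_ne_zero ?_) ?_
    · rw [show (1 : Polynomial k) = C 1 by simp]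
      exact Polynomial.X_sub_C_ne_zero 1
    · exact Polynomial.X_sub_C_ne_zero l
  have hfne : f ≠ 0 := by
    intro h
    rw [h, zero_pow hp.ne_zero] at hf
    exact mul_ne_zero ha hW₀ne hf
  have hmult : 1 + W₀.rootMultiplicity 0 = p * f.rootMultiplicity 0 := by
    have h1 : rootMultiplicity 0 ((X * (X-1) * (X - C l)) * W₀)
        = rootMultiplicity 0 (X * (X-1) * (X - C l) : Polynomial k) + W₀.rootMultiplicity 0 :=
      rootMultiplicity_mul (mul_ne_zero ha hW₀ne)
    have h2 : rootMultiplicity 0 (X * (X-1) * (X - C l) : Polynomial k) = 1 := by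
      rw [mul_assoc, rootMultiplicity_mul (by rw [← mul_assoc]; exact ha)]
      have hX : rootMultiplicity 0 (X : Polynomial k) = 1 := by
        simpa using rootMultiplicity_X_sub_C_self (x := (0 : k))
      have hrest : rootMultiplicity 0 ((X-1) * (X - C l) : Polynomial k) = 0 := by
        apply rootMultiplicity_eq_zero
        simp [IsRoot, hl0]
      rw [hX, hrest]
    rw [hf, rootMult_pow hfne, h2] at h1
    omega
  have hNcast : ((W₀.rootMultiplicity 0 + 1 : ℕ) : k) = 0 := by
    rw [add_comm, hmult]
    simp [CharP.cast_eq_zero k p]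
  exact endgame v₁ v₂ W₀ hW₀def hv₁0 hW₀ne hNcast
end

section
/- Let p be an odd prime, k an algebraically closed field of characteristic p, λ ∈ k with λ ≠ 0 and λ ≠ 1, and β ∈ k. Let L be the operator L(u) = t(t-1)(t-λ)·u'' + (3t² - 2(1+λ)t + λ)·u' + (t - β)·u. Suppose u₀, u₁, …, u_{p-1} ∈ k satisfy the recursion λ·(i+1)²·u_{i+1} = ((1+λ)·(i² + i) + β)·u_i - i²·u_{i-1} for 0 ≤ i ≤ p - 2 (with u_{-1} = 0, integers interpreted in k). Then the polynomial u := ∑_{i=0}^{p-1} u_i t^i satisfies L(u) = 0 if and only if β·u_{p-1} - u_{p-2} = 0. -/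
open Polynomial

/-- Let `p` be an odd prime, `k` algebraically closed of characteristic
`p`, `λ ∈ k \ {0,1}`, `β ∈ k`.  Suppose `u₀, …, u_{p-1} ∈ k` satisfy the recursion
`λ (i+1)² u_{i+1} = ((1+λ)(i² + i) + β) uᵢ - i² u_{i-1}` for `0 ≤ i ≤ p - 2` (with
`u₋₁ = 0`).  Then `u := ∑_{i=0}^{p-1} uᵢ tⁱ` satisfies `L(u) = 0` if and only if
`β u_{p-1} - u_{p-2} = 0`. -/
theorem stmt11 {k : Type*} [Field k] [IsAlgClosed k] (p : ℕ) (hp : p.Prime) (hodd : Odd p)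
    [CharP k p] (l b : k) (hl0 : l ≠ 0) (hl1 : l ≠ 1)
    (c : ℕ → k)
    (hrec : ∀ i ≤ p - 2, l * ((i : k) + 1) ^ 2 * c (i + 1)
      = ((1 + l) * ((i : k) ^ 2 + (i : k)) + b) * c i
        - (i : k) ^ 2 * (if i = 0 then 0 else c (i - 1)))
    (u : Polynomial k) (hu : u = ∑ i ∈ Finset.range p, Polynomial.C (c i) * X ^ i) :
    Lop l b u = 0 ↔ b * c (p - 1) - c (p - 2) = 0 := by
  have hp3 : 3 ≤ p := by
    obtain ⟨m, hm⟩ := hodd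
    have := hp.two_le
    omega
  have hc : ∀ j, u.coeff j = if j < p then c j else 0 := by
    intro j
    simp only [hu, finset_sum_coeff, coeff_C_mul, coeff_X_pow, mul_ite, mul_one, mul_zero]
    rw [Finset.sum_ite_eq (Finset.range p) j c]
    simp [Finset.mem_range]
  have hd1 : ∀ j, (derivative u).coeff j = ((j:k)+1) * u.coeff (j+1) := by
    intro j; rw [Polynomial.coeff_derivative]; push_cast; ring
  have hd2 : ∀ j, (derivative (derivative u)).coeff j
      = ((j:k)+1) * ((j:k)+2) * u.coeff (j+2) := by
    intro j; rw [Polynomial.coeff_derivative, Polynomial.coeff_derivative]; push_cast; ring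
  have hX : ∀ (q : Polynomial k) (n : ℕ), (X * q).coeff n
      = if n = 0 then 0 else q.coeff (n-1) := by
    intro q n
    cases n with
    | zero => simp [Polynomial.mul_coeff_zero]
    | succ n => simp [Polynomial.coeff_X_mul]
  have hL : Lop l b u =
      X*(X*(X*(derivative (derivative u)))) - C (1+l) * (X*(X*(derivative (derivative u))))
      + C l * (X*(derivative (derivative u)))
      + C 3 * (X*(X*(derivative u))) - C (2*(1+l)) * (X*(derivative u)) + C l * (derivative u)
      + X*u - C b * u := by
    unfold Lop
    simp only [map_mul, map_add, map_one, map_ofNat]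
    ring
  have key : Lop l b u = C (c (p-2) - b * c (p-1)) * X ^ (p-1) := by
    ext n
    rw [hL]
    simp only [coeff_add, coeff_sub, coeff_C_mul, hX, coeff_X_pow]
    rcases n with _ | _ | _ | m
    · -- n = 0
      have h0 : u.coeff 0 = c 0 := by rw [hc]; rw [if_pos]; omega
      have h1 : u.coeff 1 = c 1 := by rw [hc]; rw [if_pos]; omega
      have e := hrec 0 (by omega)
      simp only [Nat.cast_zero] at e
      simp only [if_pos rfl, if_neg (by omega : ¬ (0 : ℕ) = p - 1), hd1, h0, h1]
      push_cast
      linear_combination e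
    · -- n = 1
      have h0 : u.coeff 0 = c 0 := by rw [hc]; rw [if_pos]; omega
      have h1 : u.coeff 1 = c 1 := by rw [hc]; rw [if_pos]; omega
      have h2 : u.coeff 2 = c 2 := by rw [hc]; rw [if_pos]; omega
      have e := hrec 1 (by omega)
      simp only [Nat.cast_one, if_neg (by omega : ¬ (1 : ℕ) = 0)] at e
      norm_num [hd1, hd2, if_neg (by omega : ¬ (1 : ℕ) = p - 1)]
      rw [h0, h1, h2]
      linear_combination e
    · -- n = 2
      have h1 : u.coeff 1 = c 1 := by rw [hc]; rw [if_pos]; omega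
      have h2 : u.coeff 2 = c 2 := by rw [hc]; rw [if_pos]; omega
      by_cases hp3' : p = 3
      · -- accessory case for p = 3
        subst hp3'
        have h3 : u.coeff 3 = 0 := by rw [hc]; rw [if_neg]; omega
        have hch : ((3 : ℕ) : k) = 0 := CharP.cast_eq_zero k 3
        norm_num [hd1, hd2]
        rw [h1, h2, h3]
        push_cast at hch ⊢
        linear_combination (-(2 * l * c 2) - 2 * c 2 + c 1) * hch
      · -- p ≥ 5 : recursion case
        have h3 : u.coeff 3 = c 3 := by rw [hc]; rw [if_pos]; omega
        have e := hrec 2 (by omega)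
        simp only [Nat.cast_ofNat, if_neg (by omega : ¬ (2 : ℕ) = 0)] at e
        norm_num [hd1, hd2, if_neg (by omega : ¬ (2 : ℕ) = p - 1)]
        rw [h1, h2, h3]
        norm_num at e
        linear_combination e
    · -- n = m + 3
      rcases (by omega : m + 3 ≤ p - 2 ∨ m + 4 = p ∨ m + 3 = p ∨ p + 1 ≤ m + 3) with hm | hm | hm | hm
      · -- recursion case
        have h2 : u.coeff (m+2) = c (m+2) := by rw [hc]; rw [if_pos]; omega
        have h3 : u.coeff (m+3) = c (m+3) := by rw [hc]; rw [if_pos]; omega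
        have h4 : u.coeff (m+4) = c (m+4) := by rw [hc]; rw [if_pos]; omega
        have e := hrec (m+3) (by omega)
        simp only [if_neg (by omega : ¬ m + 3 = 0), Nat.add_sub_cancel] at e
        norm_num [hd1, hd2, if_neg (by omega : ¬ m + 3 = p - 1)]
        rw [h2, h3, h4]
        push_cast at e ⊢
        linear_combination e
      · -- accessory case : n = p - 1
        have h2 : u.coeff (m+2) = c (m+2) := by rw [hc]; rw [if_pos]; omega
        have h3 : u.coeff (m+3) = c (m+3) := by rw [hc]; rw [if_pos]; omega
        have h4 : u.coeff (m+4) = 0 := by rw [hc]; rw [if_neg]; omega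
        have hch : ((m + 4 : ℕ) : k) = 0 := by rw [hm]; exact CharP.cast_eq_zero k p
        have hp2 : p - 2 = m + 2 := by omega
        have hp1 : p - 1 = m + 3 := by omega
        norm_num [hd1, hd2, if_pos (by omega : m + 3 = p - 1), hp1, hp2]
        rw [h2, h3, h4]
        push_cast at hch ⊢
        rw [show (m : k) = -4 by linear_combination hch]
        ring
      · -- n = p : coefficient p² c_{p-1} = 0
        have h2 : u.coeff (m+2) = c (m+2) := by rw [hc]; rw [if_pos]; omega
        have h3 : u.coeff (m+3) = 0 := by rw [hc]; rw [if_neg]; omega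
        have h4 : u.coeff (m+4) = 0 := by rw [hc]; rw [if_neg]; omega
        have hch : ((m + 3 : ℕ) : k) = 0 := by rw [hm]; exact CharP.cast_eq_zero k p
        norm_num [hd1, hd2, if_neg (by omega : ¬ m + 3 = p - 1)]
        rw [h2, h3, h4]
        push_cast at hch ⊢
        rw [show (m : k) = -3 by linear_combination hch]
        ring
      · -- n > p : everything vanishes
        have h2 : u.coeff (m+2) = 0 := by rw [hc]; rw [if_neg]; omega
        have h3 : u.coeff (m+3) = 0 := by rw [hc]; rw [if_neg]; omega
        have h4 : u.coeff (m+4) = 0 := by rw [hc]; rw [if_neg]; omega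
        norm_num [hd1, hd2, if_neg (by omega : ¬ m + 3 = p - 1)]
        rw [h2, h3, h4]
        ring
  rw [key]
  constructor
  · intro h
    rcases mul_eq_zero.mp h with h' | h'
    · have : c (p-2) - b * c (p-1) = 0 := C_eq_zero.mp h'
      linear_combination -this
    · exact absurd h' (pow_ne_zero _ X_ne_zero)
  · intro h
    have : c (p-2) - b * c (p-1) = 0 := by linear_combination -h
    rw [this, map_zero, zero_mul]
end

section
/- Let p ≥ 11 be a prime and consider the polynomials F = 40βλ² + (80β + 14β² + 360)λ + 132β + 14β² + 360 + β³ and G = -4βλ³ + (3β² - 12β - 24)λ² + (12 - 8β)λ + 12 in 𝔽_p[λ, β]. Then there exist λ, β in an algebraic closure of 𝔽_p with F(λ, β) = 0, G(λ, β) = 0, λ ≠ 0 and λ ≠ 1. -/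
lemma stmt13_wit (q : ℕ) [Fact q.Prime] (l0 b0 : ZMod q)
    (hF : 40 * b0 * l0 ^ 2 + (80 * b0 + 14 * b0 ^ 2 + 360) * l0
          + 132 * b0 + 14 * b0 ^ 2 + 360 + b0 ^ 3 = 0)
    (hG : -4 * b0 * l0 ^ 3 + (3 * b0 ^ 2 - 12 * b0 - 24) * l0 ^ 2 + (12 - 8 * b0) * l0 + 12 = 0)
    (h0 : l0 ≠ 0) (h1 : l0 ≠ 1) :
    ∃ l b : AlgebraicClosure (ZMod q),
      40 * b * l ^ 2 + (80 * b + 14 * b ^ 2 + 360) * l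
          + 132 * b + 14 * b ^ 2 + 360 + b ^ 3 = 0 ∧
        -4 * b * l ^ 3 + (3 * b ^ 2 - 12 * b - 24) * l ^ 2 + (12 - 8 * b) * l + 12 = 0 ∧
        l ≠ 0 ∧ l ≠ 1 := by
  set φ := algebraMap (ZMod q) (AlgebraicClosure (ZMod q)) with hφ
  refine ⟨φ l0, φ b0, ?_, ?_, ?_, ?_⟩
  · have h := congrArg φ hF
    simpa only [map_add, map_mul, map_pow, map_sub, map_neg, map_ofNat, map_zero] using h
  · have h := congrArg φ hG
    simpa only [map_add, map_mul, map_pow, map_sub, map_neg, map_ofNat, map_zero] using h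
  · intro h; exact h0 (φ.injective (by rw [h, map_zero]))
  · intro h; exact h1 (φ.injective (by rw [h, map_one]))


instance : Fact (Nat.Prime 37) := ⟨by norm_num⟩
instance : Fact (Nat.Prime 601) := ⟨by norm_num⟩
instance : Fact (Nat.Prime 266647) := ⟨by norm_num⟩

lemma stmt13_w37 :
    ∃ l b : AlgebraicClosure (ZMod 37),
      40 * b * l ^ 2 + (80 * b + 14 * b ^ 2 + 360) * l
          + 132 * b + 14 * b ^ 2 + 360 + b ^ 3 = 0 ∧
        -4 * b * l ^ 3 + (3 * b ^ 2 - 12 * b - 24) * l ^ 2 + (12 - 8 * b) * l + 12 = 0 ∧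
        l ≠ 0 ∧ l ≠ 1 := by
  exact stmt13_wit 37 13 15 (by decide) (by decide) (by decide) (by decide)

lemma stmt13_w601 :
    ∃ l b : AlgebraicClosure (ZMod 601),
      40 * b * l ^ 2 + (80 * b + 14 * b ^ 2 + 360) * l
          + 132 * b + 14 * b ^ 2 + 360 + b ^ 3 = 0 ∧
        -4 * b * l ^ 3 + (3 * b ^ 2 - 12 * b - 24) * l ^ 2 + (12 - 8 * b) * l + 12 = 0 ∧
        l ≠ 0 ∧ l ≠ 1 := by
  exact stmt13_wit 601 109 496 (by decide) (by decide) (by decide) (by decide)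

lemma stmt13_w266647 :
    ∃ l b : AlgebraicClosure (ZMod 266647),
      40 * b * l ^ 2 + (80 * b + 14 * b ^ 2 + 360) * l
          + 132 * b + 14 * b ^ 2 + 360 + b ^ 3 = 0 ∧
        -4 * b * l ^ 3 + (3 * b ^ 2 - 12 * b - 24) * l ^ 2 + (12 - 8 * b) * l + 12 = 0 ∧
        l ≠ 0 ∧ l ≠ 1 := by
  exact stmt13_wit 266647 126078 213237 (by decide) (by decide) (by decide) (by decide)

set_option maxHeartbeats 2000000 in
/-- Let `p ≥ 11` be a prime and consider
`F = 40βλ² + (80β + 14β² + 360)λ + 132β + 14β² + 360 + β³` and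
`G = -4βλ³ + (3β² - 12β - 24)λ² + (12 - 8β)λ + 12` over `𝔽_p`.  Then there exist
`λ, β` in an algebraic closure of `𝔽_p` with `F(λ,β) = 0`, `G(λ,β) = 0`, `λ ≠ 0`
and `λ ≠ 1`. -/
theorem stmt13 (p : ℕ) (hp : p.Prime) (hge : 11 ≤ p) [Fact p.Prime] :
    ∃ l b : AlgebraicClosure (ZMod p),
      40 * b * l ^ 2 + (80 * b + 14 * b ^ 2 + 360) * l
          + 132 * b + 14 * b ^ 2 + 360 + b ^ 3 = 0 ∧
        -4 * b * l ^ 3 + (3 * b ^ 2 - 12 * b - 24) * l ^ 2 + (12 - 8 * b) * l + 12 = 0 ∧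
        l ≠ 0 ∧ l ≠ 1 := by
  haveI hch : CharP (AlgebraicClosure (ZMod p)) p :=
    charP_of_injective_algebraMap (algebraMap (ZMod p) (AlgebraicClosure (ZMod p))).injective p
  by_cases hbig : (17788288017 : AlgebraicClosure (ZMod p)) = 0
  · -- bad primes: p ∣ 3 * 37 * 601 * 266647
    have hdvd : p ∣ 17788288017 := by
      have h0 : ((17788288017 : ℕ) : AlgebraicClosure (ZMod p)) = 0 := by exact_mod_cast hbig
      exact (CharP.cast_eq_zero_iff (AlgebraicClosure (ZMod p)) p _).mp h0
    have hsplit : (17788288017 : ℕ) = 3 * (37 * (601 * 266647)) := by norm_num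
    rw [hsplit] at hdvd
    rcases (Nat.Prime.dvd_mul hp).mp hdvd with h | h
    · exact absurd ((Nat.prime_dvd_prime_iff_eq hp (by norm_num)).mp h) (by omega)
    rcases (Nat.Prime.dvd_mul hp).mp h with h | h
    · have hp37 : p = 37 := (Nat.prime_dvd_prime_iff_eq hp (by norm_num)).mp h
      subst hp37
      exact stmt13_w37
    rcases (Nat.Prime.dvd_mul hp).mp h with h | h
    · have hp601 : p = 601 := (Nat.prime_dvd_prime_iff_eq hp (by norm_num)).mp h
      subst hp601
      exact stmt13_w601
    · have hpL : p = 266647 := (Nat.prime_dvd_prime_iff_eq hp (by norm_num)).mp h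
      subst hpL
      exact stmt13_w266647
  · -- generic case
    have hsm : ∀ n : ℕ, 0 < n → n < 11 → ((n : ℕ) : AlgebraicClosure (ZMod p)) ≠ 0 := by
      intro n hn0 hn1 hz
      rw [CharP.cast_eq_zero_iff (AlgebraicClosure (ZMod p)) p] at hz
      exact absurd (Nat.le_of_dvd hn0 hz) (by omega)
    have h2 : (2 : AlgebraicClosure (ZMod p)) ≠ 0 := by exact_mod_cast hsm 2 (by norm_num) (by norm_num)
    have h3 : (3 : AlgebraicClosure (ZMod p)) ≠ 0 := by exact_mod_cast hsm 3 (by norm_num) (by norm_num)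
    have h5 : (5 : AlgebraicClosure (ZMod p)) ≠ 0 := by exact_mod_cast hsm 5 (by norm_num) (by norm_num)
    have h7 : (7 : AlgebraicClosure (ZMod p)) ≠ 0 := by exact_mod_cast hsm 7 (by norm_num) (by norm_num)
    have h4 : (4 : AlgebraicClosure (ZMod p)) ≠ 0 := by
      have e : (4 : AlgebraicClosure (ZMod p)) = 2 ^ 2 := by norm_num
      rw [e]; exact pow_ne_zero _ h2
    have h9 : (9 : AlgebraicClosure (ZMod p)) ≠ 0 := by
      have e : (9 : AlgebraicClosure (ZMod p)) = 3 ^ 2 := by norm_num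
      rw [e]; exact pow_ne_zero _ h3
    have hfac : (17788288017 : AlgebraicClosure (ZMod p)) = 111 * 601 * 266647 := by norm_num
    have h111 : (111 : AlgebraicClosure (ZMod p)) ≠ 0 := by
      intro h; apply hbig; rw [hfac, h]; ring
    have h601 : (601 : AlgebraicClosure (ZMod p)) ≠ 0 := by
      intro h; apply hbig; rw [hfac, h]; ring
    have h266647 : (266647 : AlgebraicClosure (ZMod p)) ≠ 0 := by
      intro h; apply hbig; rw [hfac, h]; ring
    -- the resultant polynomial u
    set P : Polynomial (AlgebraicClosure (ZMod p)) := Polynomial.C 9 + Polynomial.C 111 * Polynomial.X ^ 1 + Polynomial.C 726 * Polynomial.X ^ 2 + Polynomial.C 4997 * Polynomial.X ^ 3 + Polynomial.C 25077 * Polynomial.X ^ 4 + Polynomial.C 69623 * Polynomial.X ^ 5 + Polynomial.C 135382 * Polynomial.X ^ 6 + Polynomial.C 170084 * Polynomial.X ^ 7 + Polynomial.C 86971 * Polynomial.X ^ 8 + Polynomial.C 15960 * Polynomial.X ^ 9 + Polynomial.C 1360 * Polynomial.X ^ 10 with hP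
    have hc1 : P.coeff 1 = 111 := by
      simp [hP, Polynomial.coeff_add, Polynomial.coeff_C_mul, Polynomial.coeff_X_pow,
        Polynomial.coeff_C]
    have hcne : P.coeff 1 ≠ 0 := by rw [hc1]; exact h111
    have hP0 : P ≠ 0 := fun h => hcne (by rw [h, Polynomial.coeff_zero])
    have hdeg : P.degree ≠ 0 := by
      have hnd : 1 ≤ P.natDegree := Polynomial.le_natDegree_of_ne_zero hcne
      rw [Polynomial.degree_eq_natDegree hP0]
      intro h
      have hz : P.natDegree = 0 := by exact_mod_cast h
      omega
    obtain ⟨l, hl⟩ := IsAlgClosed.exists_root P hdeg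
    have hu : (9) + (111)*l + (726)*l^2 + (4997)*l^3 + (25077)*l^4 + (69623)*l^5 + (135382)*l^6 + (170084)*l^7 + (86971)*l^8 + (15960)*l^9 + (1360)*l^10 = 0 := by
      have h := hl
      simp only [hP, Polynomial.IsRoot, Polynomial.eval_add, Polynomial.eval_mul,
        Polynomial.eval_pow, Polynomial.eval_C, Polynomial.eval_X] at h
      linear_combination h
    have hl0 : l ≠ 0 := by
      intro h
      rw [h] at hu
      have h90 : (9 : AlgebraicClosure (ZMod p)) = 0 := by linear_combination hu
      exact h9 h90
    have hl1 : l ≠ 1 := by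
      intro h
      rw [h] at hu
      have hS : (510300 : AlgebraicClosure (ZMod p)) = 0 := by linear_combination hu
      have e : (510300 : AlgebraicClosure (ZMod p)) = 2 ^ 2 * 3 ^ 6 * 5 ^ 2 * 7 := by norm_num
      rw [e] at hS
      rcases mul_eq_zero.mp hS with ha | ha
      · rcases mul_eq_zero.mp ha with hb | hb
        · rcases mul_eq_zero.mp hb with hc | hc
          · exact pow_ne_zero _ h2 hc
          · exact pow_ne_zero _ h3 hc
        · exact pow_ne_zero _ h5 hb
      · exact h7 ha
    have hh : (7 + 123*l + 577*l^2 + 372*l^3 + 136*l^4 : AlgebraicClosure (ZMod p)) ≠ 0 := by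
      intro h
      have hN : (1263728118679978173367500 : AlgebraicClosure (ZMod p)) = 0 := by
        linear_combination ((-2372046302085781069736681) + (-30783692627085213298279553)*l + (-20692648589461656644049988)*l^2 + (-8028715718512341353943688)*l^3) * hu + ((3230306405350286828713947) + (20431812188171905499067441)*l + (135475662741947252283009717)*l^2 + (988126074436908516520927909)*l^3 + (3067863876097582199632684582)*l^4 + (6524282515002786541137972227)*l^5 + (9251807098683526207628961754)*l^6 + (4987368996404220655591020443)*l^7 + (929510900560727288295431800)*l^8 + (80287157185123413539436880)*l^9) * h
      have hNfac : (1263728118679978173367500 : AlgebraicClosure (ZMod p)) = 2 ^ 2 * 3 ^ 9 * 5 ^ 4 * 601 ^ 2 * 266647 ^ 2 := by norm_num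
      rw [hNfac] at hN
      rcases mul_eq_zero.mp hN with ha | ha
      · rcases mul_eq_zero.mp ha with hb | hb
        · rcases mul_eq_zero.mp hb with hc | hc
          · rcases mul_eq_zero.mp hc with hd | hd
            · exact pow_ne_zero _ h2 hd
            · exact pow_ne_zero _ h3 hd
          · exact pow_ne_zero _ h5 hc
        · exact pow_ne_zero _ h601 hb
      · exact pow_ne_zero _ h266647 ha
    have hA : (4*l^2*(7 + 123*l + 577*l^2 + 372*l^3 + 136*l^4) : AlgebraicClosure (ZMod p)) ≠ 0 :=
      mul_ne_zero (mul_ne_zero h4 (pow_ne_zero 2 hl0)) hh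
    set b : (AlgebraicClosure (ZMod p)) := (96*l + 744*l^2 + 1008*l^3 - 3984*l^4 - 4344*l^5) / (4*l^2*(7 + 123*l + 577*l^2 + 372*l^3 + 136*l^4)) with hbdef
    have hb : b * (4*l^2*(7 + 123*l + 577*l^2 + 372*l^3 + 136*l^4)) = 96*l + 744*l^2 + 1008*l^3 - 3984*l^4 - 4344*l^5 := div_mul_cancel₀ _ hA
    have hGkey : ((4*l^2*(7 + 123*l + 577*l^2 + 372*l^3 + 136*l^4)) : AlgebraicClosure (ZMod p))^2 *
        (-4 * b * l ^ 3 + (3 * b ^ 2 - 12 * b - 24) * l ^ 2 + (12 - 8 * b) * l + 12) = 0 := by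
      linear_combination ((64*l^3 - 2040*l^4 - 21456*l^5 - 53520*l^6 - 44472*l^7 - 12480*l^8 - 2176*l^9) + (84*l^4 + 1476*l^5 + 6924*l^6 + 4464*l^7 + 1632*l^8)*b) * hb + (1728 * l^4) * hu
    have hG : -4 * b * l ^ 3 + (3 * b ^ 2 - 12 * b - 24) * l ^ 2 + (12 - 8 * b) * l + 12 = 0 :=
      (mul_eq_zero.mp hGkey).resolve_left (pow_ne_zero 2 hA)
    have hFkey : (9 * l^4 : AlgebraicClosure (ZMod p)) *
        (40 * b * l ^ 2 + (80 * b + 14 * b ^ 2 + 360) * l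
          + 132 * b + 14 * b ^ 2 + 360 + b ^ 3) = 0 := by
      linear_combination ((8*l + 54*l^2 + 46*l^3) + 3*l^2*b) * hG + hb
    have hF : 40 * b * l ^ 2 + (80 * b + 14 * b ^ 2 + 360) * l
          + 132 * b + 14 * b ^ 2 + 360 + b ^ 3 = 0 :=
      (mul_eq_zero.mp hFkey).resolve_left (mul_ne_zero h9 (pow_ne_zero 4 hl0))
    exact ⟨l, b, hF, hG, hl0, hl1⟩
end

section
/- Let k be a field, a ∈ k, and let p₁, p₂, Q, u be rational functions in k(t) such that p₁, p₂ are regular at a, Q is regular and nonvanishing at a, Q' = p₁·Q, u is a polynomial with u(a) = 0 and u'(a) ≠ 0 (a simple zero), and u'' + p₁·u' + p₂·u = 0. Then the rational function 1/(Q·u²) has vanishing residue at a; that is, there exist c ∈ k and a rational function h ∈ k(t) regular at a such that 1/(Q·u²) = c/(t-a)² + h. -/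
/-- The derivative `d/dt` on the field `k(t)` of rational functions, computed by the
quotient rule from the (coprime) numerator and denominator. -/
noncomputable def ratDeriv {k : Type*} [Field k] (f : RatFunc k) : RatFunc k :=
  (algebraMap (Polynomial k) (RatFunc k) (Polynomial.derivative f.num)
      * algebraMap (Polynomial k) (RatFunc k) f.denom
    - algebraMap (Polynomial k) (RatFunc k) f.num
      * algebraMap (Polynomial k) (RatFunc k) (Polynomial.derivative f.denom))
  / (algebraMap (Polynomial k) (RatFunc k) f.denom) ^ 2

/-- A rational function is regular at a point `a` if its (reduced) denominator does not
vanish at `a`. -/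
def RatFunc.IsRegularAt {k : Type*} [Field k] (f : RatFunc k) (a : k) : Prop :=
  f.denom.eval a ≠ 0

lemma ratDeriv_algebraMap {k : Type*} [Field k] (P : Polynomial k) :
    ratDeriv (algebraMap (Polynomial k) (RatFunc k) P)
      = algebraMap (Polynomial k) (RatFunc k) (Polynomial.derivative P) := by
  simp [ratDeriv, RatFunc.num_algebraMap, RatFunc.denom_algebraMap]

/-- Let `k` be a field, `a ∈ k`, and `p₁, p₂, Q, u ∈ k(t)` such that
`p₁, p₂` are regular at `a`, `Q` is regular and nonvanishing at `a`, `Q' = p₁ Q`,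
`u` is a polynomial with a simple zero at `a`, and `u'' + p₁ u' + p₂ u = 0`.  Then
`1/(Q u²)` has vanishing residue at `a`: there are `c ∈ k` and `h ∈ k(t)` regular at `a`
with `1/(Q u²) = c/(t-a)² + h`. -/
theorem stmt15 {k : Type*} [Field k] (a : k) (p₁ p₂ Q u : RatFunc k) (U : Polynomial k)
    (hp₁ : p₁.IsRegularAt a) (hp₂ : p₂.IsRegularAt a)
    (hQreg : Q.IsRegularAt a) (hQne : Q.num.eval a ≠ 0)
    (hQ' : ratDeriv Q = p₁ * Q)
    (hu : u = algebraMap (Polynomial k) (RatFunc k) U)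
    (hU0 : U.eval a = 0) (hU1 : (Polynomial.derivative U).eval a ≠ 0)
    (hode : ratDeriv (ratDeriv u) + p₁ * ratDeriv u + p₂ * u = 0) :
    ∃ (c : k) (h : RatFunc k), h.IsRegularAt a ∧
      1 / (Q * u ^ 2)
        = RatFunc.C c / (RatFunc.X - RatFunc.C a) ^ 2 + h := by
  classical
  set φ := algebraMap (Polynomial k) (RatFunc k) with hφ
  set s : Polynomial k := Polynomial.X - Polynomial.C a with hs
  -- factor U
  obtain ⟨V, hUV⟩ : s ∣ U := by
    rw [hs]; exact Polynomial.dvd_iff_isRoot.mpr hU0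
  have hseval : s.eval a = 0 := by simp [hs]
  have hdU : (Polynomial.derivative U).eval a = V.eval a := by
    rw [hUV]
    simp [Polynomial.derivative_mul, hs]
  have hVa : V.eval a ≠ 0 := by rwa [hdU] at hU1
  have hd2U : (Polynomial.derivative (Polynomial.derivative U)).eval a
      = 2 * (Polynomial.derivative V).eval a := by
    rw [hUV]
    simp [Polynomial.derivative_mul, hs]
    ring
  -- num and denom of Q
  set N := Q.num with hNdef
  set D := Q.denom with hDdef
  have hD : D.eval a ≠ 0 := hQreg
  have hN : N.eval a ≠ 0 := hQne
  have hDne : D ≠ 0 := fun h => hD (by simp [h])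
  have hNne : N ≠ 0 := fun h => hN (by simp [h])
  have hφD : φ D ≠ 0 := RatFunc.algebraMap_ne_zero hDne
  have hφN : φ N ≠ 0 := RatFunc.algebraMap_ne_zero hNne
  have hQeq : Q = φ N / φ D := (RatFunc.num_div_denom Q).symm
  -- the identity for p₁
  have hp1 : p₁ * (φ N * φ D)
      = φ (Polynomial.derivative N) * φ D - φ N * φ (Polynomial.derivative D) := by
    have h := hQ'
    rw [ratDeriv, ← hNdef, ← hDdef, hQeq] at h
    field_simp at h
    simp only [← hφ] at h
    rw [div_eq_iff (pow_ne_zero 2 hφD)] at h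
    apply mul_right_cancel₀ hφD
    linear_combination -h
  -- the identity for p₂
  set A := p₂.num with hAdef
  set B := p₂.denom with hBdef
  have hB : B.eval a ≠ 0 := hp₂
  have hBne : B ≠ 0 := fun h => hB (by simp [h])
  have hφB : φ B ≠ 0 := RatFunc.algebraMap_ne_zero hBne
  have hp2 : p₂ * φ B = φ A := by
    rw [← RatFunc.num_div_denom p₂, ← hAdef, ← hBdef]
    field_simp
    simp only [← hφ]
    exact mul_div_cancel_right₀ _ hφB
  -- the ODE as a polynomial identity
  have hode' : φ (Polynomial.derivative (Polynomial.derivative U))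
      + p₁ * φ (Polynomial.derivative U) + p₂ * φ U = 0 := by
    rw [hu, ratDeriv_algebraMap, ratDeriv_algebraMap] at hode
    exact hode
  have keyP : N * D * B * Polynomial.derivative (Polynomial.derivative U)
      + (Polynomial.derivative N * D - N * Polynomial.derivative D) * B
          * Polynomial.derivative U
      + A * N * D * U = 0 := by
    apply RatFunc.algebraMap_injective k
    rw [map_zero]
    simp only [map_add, map_mul, map_sub]
    simp only [← hφ]
    linear_combination (φ N * φ D * φ B) * hode'
      - (φ B * φ (Polynomial.derivative U)) * hp1 - (φ N * φ D * φ U) * hp2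
  -- evaluate at a
  set n := N.eval a with hn
  set d := D.eval a with hd
  set n' := (Polynomial.derivative N).eval a with hn'
  set d' := (Polynomial.derivative D).eval a with hd'
  set v := V.eval a with hv
  set v' := (Polynomial.derivative V).eval a with hv' 
  have star : 2 * n * d * v' + n' * d * v - n * d' * v = 0 := by
    have hE := congrArg (Polynomial.eval a) keyP
    simp only [Polynomial.eval_add, Polynomial.eval_mul, Polynomial.eval_sub,
      Polynomial.eval_zero, hU0, hd2U, hdU, mul_zero] at hE
    have h2 : (Polynomial.eval a B) * (2 * n * d * v' + n' * d * v - n * d' * v)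
        = (Polynomial.eval a B) * 0 := by
      simp only [← hn, ← hd, ← hn', ← hd', ← hv, ← hv'] at hE ⊢
      linear_combination hE
    exact mul_left_cancel₀ hB h2
  -- the residue coefficient
  set c : k := d / (n * v ^ 2) with hc
  set W : Polynomial k := D - Polynomial.C c * (N * V ^ 2) with hW
  have hW0 : W.eval a = 0 := by
    simp only [hW, Polynomial.eval_sub, Polynomial.eval_mul, Polynomial.eval_C,
      Polynomial.eval_pow, hc]
    field_simp
    simp only [← hn, ← hd, ← hv]
    ring
  have hW1 : (Polynomial.derivative W).eval a = 0 := by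
    simp only [hW, map_sub, map_mul, Polynomial.derivative_C, Polynomial.derivative_mul,
      Polynomial.derivative_pow, zero_mul, Polynomial.eval_sub, Polynomial.eval_add,
      Polynomial.eval_mul, Polynomial.eval_pow, Polynomial.eval_C, Polynomial.eval_natCast,
      hc]
    simp only [← hn, ← hd, ← hn', ← hd', ← hv, ← hv']
    have hnv : n * v ^ 2 ≠ 0 := mul_ne_zero hN (pow_ne_zero _ hVa)
    simp only [Polynomial.eval_zero]
    field_simp
    linear_combination (-v) * star
  -- factor W = s^2 * W₂
  obtain ⟨W₁, hW₁⟩ : s ∣ W := by rw [hs]; exact Polynomial.dvd_iff_isRoot.mpr hW0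
  have hW₁0 : W₁.eval a = 0 := by
    have : (Polynomial.derivative W).eval a = W₁.eval a := by
      rw [hW₁]; simp [Polynomial.derivative_mul, hs, hseval]
    rw [hW1] at this
    exact this.symm
  obtain ⟨W₂, hW₂⟩ : s ∣ W₁ := by rw [hs]; exact Polynomial.dvd_iff_isRoot.mpr hW₁0
  have hWs : W = s ^ 2 * W₂ := by rw [hW₁, hW₂]; ring
  -- nonvanishing facts
  have hsne : s ≠ 0 := by rw [hs]; exact Polynomial.X_sub_C_ne_zero a
  have hVne : V ≠ 0 := fun h => hVa (by simp [hv, h])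
  have hNV2ne : N * V ^ 2 ≠ 0 := mul_ne_zero hNne (pow_ne_zero _ hVne)
  refine ⟨c, φ W₂ / φ (N * V ^ 2), ?_, ?_⟩
  · -- regularity of h at a
    have hdvd : (φ W₂ / φ (N * V ^ 2)).denom ∣ N * V ^ 2 :=
      (RatFunc.denom_dvd hNV2ne).mpr ⟨W₂, rfl⟩
    obtain ⟨g, hg⟩ := hdvd
    intro h0
    have hz : (N * V ^ 2).eval a = 0 := by rw [hg, Polynomial.eval_mul, h0, zero_mul]
    rw [Polynomial.eval_mul, Polynomial.eval_pow, ← hn, ← hv] at hz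
    exact mul_ne_zero hN (pow_ne_zero _ hVa) hz
  · have hφs : φ s ≠ 0 := RatFunc.algebraMap_ne_zero hsne
    have hφV : φ V ≠ 0 := RatFunc.algebraMap_ne_zero hVne
    have hXC : RatFunc.X - RatFunc.C a = φ s := by
      rw [hs, map_sub, RatFunc.algebraMap_X, RatFunc.algebraMap_C]
    have hCc : RatFunc.C c = φ (Polynomial.C c) := (RatFunc.algebraMap_C c).symm
    have hDeq : φ D = φ (Polynomial.C c) * (φ N * φ V ^ 2) + φ s ^ 2 * φ W₂ := by
      have hpoly : D = Polynomial.C c * (N * V ^ 2) + s ^ 2 * W₂ := by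
        have := hWs
        rw [hW] at this
        linear_combination this
      rw [hpoly]
      simp only [map_add, map_mul, map_pow]
    rw [hQeq, hu, hUV, hXC, hCc, map_mul, map_mul, map_pow]
    field_simp
    linear_combination hDeq
end
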